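/- Let (g,μ) be a Leibniz algebra over a field K with Rota-Baxter operator T, and let (μ_t,T_t) and (μ'_t,T'_t) be two formal one-parameter deformations of (g,μ,T), given by families (μ_i,T_i) and (μ'_i,T'_i) with μ_0 = μ'_0 = μ and T_0 = T'_0 = T. Suppose they are equivalent via a formal isomorphism ψ_t = Σ ψ_i t^i with ψ_0 = id_g, i.e., for every n ≥ 0 and x,y ∈ g: Σ_{i+j=n} ψ_i(μ'_j(x,y)) = Σ_{i+j+k=n} μ_i(ψ_j x, ψ_k y), and Σ_{i+j=n} ψ_i ∘ T'_j = Σ_{i+j=n} T_i ∘ ψ_j. Then the infinitesimals differ by a coboundary: for all x,y ∈ g, μ'_1(x,y) = μ_1(x,y) + μ(x,ψ_1 y) + μ(ψ_1 x,y) − ψ_1(μ(x,y)), and T'_1 = T_1 + T∘ψ_1 − ψ_1∘T. -/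

import Mathlib

/-- A bilinear map between modules over a field `K`, expressed as a predicate
on a curried two-argument function. -/
def Bilin (K : Type*) [Field K] {A B C : Type*} [AddCommGroup A] [Module K A]
    [AddCommGroup B] [Module K B] [AddCommGroup C] [Module K C]
    (f : A → B → C) : Prop :=
  (∀ a a' b, f (a + a') b = f a b + f a' b) ∧
  (∀ (c : K) (a : A) (b : B), f (c • a) b = c • f a b) ∧
  (∀ a b b', f a (b + b') = f a b + f a b') ∧
  (∀ (c : K) (a : A) (b : B), f a (c • b) = c • f a b)

/-- The (left) Leibniz identity for a bracket. -/
def IsLeibnizBracket {g : Type*} [AddCommGroup g] (br : g → g → g) : Prop :=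
  ∀ x y z, br x (br y z) = br (br x y) z + br y (br x z)


/-- If two formal one-parameter deformations `(μ_t, T_t)` and `(μ'_t, T'_t)`
of a Rota-Baxter Leibniz algebra `(g, μ, T)` are equivalent via a formal
isomorphism `ψ_t = Σ ψ_i t^i` with `ψ₀ = id`, then their infinitesimals
differ by a coboundary:
`μ'₁(x,y) = μ₁(x,y) + μ(x, ψ₁ y) + μ(ψ₁ x, y) - ψ₁(μ(x,y))` and
`T'₁ = T₁ + T ∘ ψ₁ - ψ₁ ∘ T`. -/
theorem equivalent_deformations_infinitesimals {K : Type*} [Field K]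
    {g : Type*} [AddCommGroup g] [Module K g]
    (μ : g → g → g) (hbil : Bilin K μ) (hleib : IsLeibnizBracket μ)
    (T : g → g) (hT : IsLinearMap K T)
    (hRB : ∀ x y, μ (T x) (T y) = T (μ (T x) y + μ x (T y)))
    (μi : ℕ → g → g → g) (Ti : ℕ → g → g)
    (μi' : ℕ → g → g → g) (Ti' : ℕ → g → g)
    (hμbil : ∀ i, Bilin K (μi i)) (hTilin : ∀ i, IsLinearMap K (Ti i))
    (hμbil' : ∀ i, Bilin K (μi' i)) (hTilin' : ∀ i, IsLinearMap K (Ti' i))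
    (hμ0 : μi 0 = μ) (hT0 : Ti 0 = T) (hμ0' : μi' 0 = μ) (hT0' : Ti' 0 = T)
    (hdef1 : ∀ (n : ℕ) (x y z : g),
      ∑ p ∈ Finset.HasAntidiagonal.antidiagonal n, μi p.1 x (μi p.2 y z)
        = ∑ p ∈ Finset.HasAntidiagonal.antidiagonal n, μi p.1 (μi p.2 x y) z
          + ∑ p ∈ Finset.HasAntidiagonal.antidiagonal n, μi p.1 y (μi p.2 x z))
    (hdef2 : ∀ (n : ℕ) (x y : g),
      ∑ p ∈ Finset.HasAntidiagonal.antidiagonal n, ∑ q ∈ Finset.HasAntidiagonal.antidiagonal p.2,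
          μi p.1 (Ti q.1 x) (Ti q.2 y)
        = ∑ p ∈ Finset.HasAntidiagonal.antidiagonal n, ∑ q ∈ Finset.HasAntidiagonal.antidiagonal p.2,
            Ti p.1 (μi q.1 (Ti q.2 x) y)
          + ∑ p ∈ Finset.HasAntidiagonal.antidiagonal n, ∑ q ∈ Finset.HasAntidiagonal.antidiagonal p.2,
              Ti p.1 (μi q.1 x (Ti q.2 y)))
    (hdef1' : ∀ (n : ℕ) (x y z : g),
      ∑ p ∈ Finset.HasAntidiagonal.antidiagonal n, μi' p.1 x (μi' p.2 y z)
        = ∑ p ∈ Finset.HasAntidiagonal.antidiagonal n, μi' p.1 (μi' p.2 x y) z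
          + ∑ p ∈ Finset.HasAntidiagonal.antidiagonal n, μi' p.1 y (μi' p.2 x z))
    (hdef2' : ∀ (n : ℕ) (x y : g),
      ∑ p ∈ Finset.HasAntidiagonal.antidiagonal n, ∑ q ∈ Finset.HasAntidiagonal.antidiagonal p.2,
          μi' p.1 (Ti' q.1 x) (Ti' q.2 y)
        = ∑ p ∈ Finset.HasAntidiagonal.antidiagonal n, ∑ q ∈ Finset.HasAntidiagonal.antidiagonal p.2,
            Ti' p.1 (μi' q.1 (Ti' q.2 x) y)
          + ∑ p ∈ Finset.HasAntidiagonal.antidiagonal n, ∑ q ∈ Finset.HasAntidiagonal.antidiagonal p.2,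
              Ti' p.1 (μi' q.1 x (Ti' q.2 y)))
    (ψi : ℕ → g → g) (hψlin : ∀ i, IsLinearMap K (ψi i))
    (hψ0 : ψi 0 = id)
    (hequiv1 : ∀ (n : ℕ) (x y : g),
      ∑ p ∈ Finset.HasAntidiagonal.antidiagonal n, ψi p.1 (μi' p.2 x y)
        = ∑ p ∈ Finset.HasAntidiagonal.antidiagonal n, ∑ q ∈ Finset.HasAntidiagonal.antidiagonal p.2,
            μi p.1 (ψi q.1 x) (ψi q.2 y))
    (hequiv2 : ∀ (n : ℕ) (x : g),
      ∑ p ∈ Finset.HasAntidiagonal.antidiagonal n, ψi p.1 (Ti' p.2 x)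
        = ∑ p ∈ Finset.HasAntidiagonal.antidiagonal n, Ti p.1 (ψi p.2 x)) :
    (∀ x y : g,
      μi' 1 x y = μi 1 x y + μ x (ψi 1 y) + μ (ψi 1 x) y - ψi 1 (μ x y)) ∧
    (∀ x : g, Ti' 1 x = Ti 1 x + T (ψi 1 x) - ψi 1 (T x)) := by
  constructor
  · intro x y
    have h := hequiv1 1 x y
    simp [Finset.Nat.sum_antidiagonal_eq_sum_range_succ_mk,
      Finset.sum_range_succ, hψ0, hμ0, hT0, hμ0', hT0'] at h
    rw [eq_sub_iff_add_eq]
    exact h.trans (by abel)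
  · intro x
    have h := hequiv2 1 x
    simp [Finset.Nat.sum_antidiagonal_eq_sum_range_succ_mk,
      Finset.sum_range_succ, hψ0, hμ0, hT0, hμ0', hT0'] at h
    rw [eq_sub_iff_add_eq]
    exact h.trans (by abel)
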